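/- arXiv:1308.2162 — 6 statements merged into one kernel-verified Lean document; each statement's English description precedes it below -/
import Mathlib

section
/- For any x ∈ ℝ^n, the condition √(n−1)·‖x‖ ≤ 𝟙ᵀx holds if and only if there exists t ∈ ℝ such that ‖t·𝟙 − x‖ ≤ t. That is, O_in = {x ∈ ℝ^n : ∃ t ∈ ℝ, ‖t𝟙 − x‖ ≤ t}. -/
set_option maxHeartbeats 1000000

noncomputable def onesVec (n : ℕ) : EuclideanSpace ℝ (Fin n) := WithLp.toLp 2 (fun _ => 1)

theorem Oin_alt_description (n : ℕ) (x : EuclideanSpace ℝ (Fin n)) :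
    Real.sqrt ((n : ℝ) - 1) * ‖x‖ ≤ ∑ i, x i ↔
    ∃ t : ℝ, ‖t • onesVec n - x‖ ≤ t := by
  have hnorm1 : ‖onesVec n‖ ^ 2 = (n : ℝ) := by
    rw [EuclideanSpace.norm_eq, Real.sq_sqrt (by positivity)]
    simp [onesVec]
  have hinner : (inner ℝ (onesVec n) x : ℝ) = ∑ i, x i := by
    simp [onesVec, PiLp.inner_apply]
  have key : ∀ t : ℝ, ‖t • onesVec n - x‖ ^ 2
      = (n : ℝ) * t ^ 2 - 2 * t * (∑ i, x i) + ‖x‖ ^ 2 := by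
    intro t
    rw [norm_sub_sq_real, real_inner_smul_left, hinner, norm_smul, mul_pow,
      hnorm1]
    simp [sq_abs]
    ring
  have hx2 : ‖x‖ ^ 2 = ∑ i, (x i) ^ 2 := by
    rw [EuclideanSpace.norm_eq, Real.sq_sqrt (by positivity)]
    simp [Real.norm_eq_abs, sq_abs]
  constructor
  · intro hA
    match n, x, hnorm1, hinner, key, hx2, hA with
    | 0, x, hnorm1, hinner, key, hx2, hA =>
      refine ⟨0, ?_⟩
      have hx0 : x = 0 := by ext i; exact i.elim0
      simp [hx0]
    | 1, x, hnorm1, hinner, key, hx2, hA =>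
      refine ⟨∑ i, x i, ?_⟩
      have hs0 : (0:ℝ) ≤ ∑ i, x i := by
        calc (0:ℝ) ≤ Real.sqrt (((1:ℕ):ℝ) - 1) * ‖x‖ := by positivity
        _ ≤ _ := hA
      have h2 : ‖x‖ ^ 2 = (∑ i, x i) ^ 2 := by
        rw [hx2]; simp [Fin.sum_univ_one]
      have hz : ‖(∑ i, x i) • onesVec 1 - x‖ ^ 2 = 0 := by
        rw [key (∑ i, x i), h2]; push_cast; ring
      have : ‖(∑ i, x i) • onesVec 1 - x‖ = 0 := by
        have := norm_nonneg ((∑ i, x i) • onesVec 1 - x)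
        nlinarith
      linarith
    | (m + 2), x, hnorm1, hinner, key, hx2, hA =>
      have hc : (1:ℝ) ≤ ((m + 2 : ℕ) : ℝ) - 1 := by push_cast; linarith
      have ha2 : Real.sqrt (((m + 2 : ℕ) : ℝ) - 1) ^ 2 = ((m + 2 : ℕ) : ℝ) - 1 :=
        Real.sq_sqrt (by linarith)
      have hs0 : (0:ℝ) ≤ ∑ i, x i := le_trans (by positivity) hA
      have hsq : (((m + 2 : ℕ) : ℝ) - 1) * ‖x‖ ^ 2 ≤ (∑ i, x i) ^ 2 := by
        nlinarith [mul_self_le_mul_self (by positivity :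
          (0:ℝ) ≤ Real.sqrt (((m + 2 : ℕ) : ℝ) - 1) * ‖x‖) hA, ha2,
          norm_nonneg x, Real.sqrt_nonneg (((m + 2 : ℕ) : ℝ) - 1)]
      refine ⟨(∑ i, x i) / (((m + 2 : ℕ) : ℝ) - 1), ?_⟩
      set t := (∑ i, x i) / (((m + 2 : ℕ) : ℝ) - 1) with htdef
      have ht0 : 0 ≤ t := div_nonneg hs0 (by linarith)
      have hts : t * (((m + 2 : ℕ) : ℝ) - 1) = ∑ i, x i :=
        div_mul_cancel₀ _ (by positivity)
      have hle : ‖t • onesVec (m + 2) - x‖ ^ 2 ≤ t ^ 2 := by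
        rw [key t]
        nlinarith [hsq, hts, ht0, hc, sq_nonneg t]
      nlinarith [norm_nonneg (t • onesVec (m + 2) - x), hle, ht0]
  · rintro ⟨t, ht⟩
    have ht0 : 0 ≤ t := le_trans (norm_nonneg _) ht
    have hle : ‖t • onesVec n - x‖ ^ 2 ≤ t ^ 2 :=
      pow_le_pow_left₀ (norm_nonneg _) ht 2
    rw [key t] at hle
    rcases Nat.eq_zero_or_pos n with hn | hn
    · subst hn
      have hx0 : x = 0 := by ext i; exact i.elim0
      simp [hx0, Real.sqrt_eq_zero_of_nonpos (by norm_num : ((0:ℕ):ℝ) - 1 ≤ 0)]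
    · have hn1 : (1:ℝ) ≤ (n:ℝ) := by exact_mod_cast hn
      have ha2 : Real.sqrt ((n:ℝ) - 1) ^ 2 = (n:ℝ) - 1 :=
        Real.sq_sqrt (by linarith)
      rcases eq_or_lt_of_le ht0 with rfl | htpos
      · have hr0 : ‖x‖ = 0 := by nlinarith [norm_nonneg x]
        have hx0 : x = 0 := norm_eq_zero.mp hr0
        simp [hx0]
      · nlinarith [two_mul_le_add_sq (Real.sqrt ((n:ℝ) - 1) * t) ‖x‖,
          Real.sqrt_nonneg ((n:ℝ) - 1), norm_nonneg x]
end

section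
/- Let P = {x : Hᵀx ≤ 𝟙} with vertex matrix V and slack matrix S = 𝟙_{f×v} − HᵀV. Suppose A, B are nonnegative K*- and K-maps with S = AᵀB exactly (an exact K-factorization). Then the set C_A = {x ∈ ℝ^n : ∃ y ∈ K, 𝟙 − Hᵀx − Aᵀy = 0} contains every vertex of P, and hence (by convexity of C_A and C_A ⊆ Inn_P(A) ⊆ P) Inn_P(A) = P. -/
open RealInnerProductSpace

theorem exact_factorization_inn_eq_P (n f v m : ℕ)
    (h : Fin f → EuclideanSpace ℝ (Fin n))
    (V : Fin v → EuclideanSpace ℝ (Fin n))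
    (hPV : {x : EuclideanSpace ℝ (Fin n) | ∀ i, ⟪h i, x⟫ ≤ 1} =
      convexHull ℝ (Set.range V))
    (K : Set (EuclideanSpace ℝ (Fin m)))
    (hKclosed : IsClosed K) (hKconv : Convex ℝ K)
    (hKcone : ∀ c : ℝ, 0 ≤ c → ∀ y ∈ K, c • y ∈ K)
    (A : EuclideanSpace ℝ (Fin f) →L[ℝ] EuclideanSpace ℝ (Fin m))
    (B : EuclideanSpace ℝ (Fin v) →L[ℝ] EuclideanSpace ℝ (Fin m))
    (hA : ∀ i : Fin f, A (EuclideanSpace.single i 1) ∈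
      {w : EuclideanSpace ℝ (Fin m) | ∀ y ∈ K, 0 ≤ ⟪w, y⟫})
    (hB : ∀ j : Fin v, B (EuclideanSpace.single j 1) ∈ K)
    (hfact : ∀ (i : Fin f) (j : Fin v),
      1 - ⟪h i, V j⟫ = ⟪A (EuclideanSpace.single i 1), B (EuclideanSpace.single j 1)⟫) :
    (∀ j : Fin v, ∃ y ∈ K, ∀ i : Fin f,
        1 - ⟪h i, V j⟫ - (ContinuousLinearMap.adjoint A y) i = 0) ∧
    {x : EuclideanSpace ℝ (Fin n) | ∃ y ∈ K,
        (WithLp.toLp 2 (fun i => 1 - ⟪h i, x⟫ - (ContinuousLinearMap.adjoint A y) i) :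
          EuclideanSpace ℝ (Fin f)) ∈
        {z : EuclideanSpace ℝ (Fin f) | Real.sqrt ((f : ℝ) - 1) * ‖z‖ ≤ ∑ i, z i}} =
      {x : EuclideanSpace ℝ (Fin n) | ∀ i, ⟪h i, x⟫ ≤ 1} := by
  -- adjoint coordinate formula
  have hadj : ∀ (y : EuclideanSpace ℝ (Fin m)) (i : Fin f),
      (ContinuousLinearMap.adjoint A y) i = ⟪A (EuclideanSpace.single i 1), y⟫ := by
    intro y i
    have h1 := EuclideanSpace.inner_single_left (𝕜 := ℝ) i (1 : ℝ)
      (ContinuousLinearMap.adjoint A y)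
    have h2 := ContinuousLinearMap.adjoint_inner_right A (EuclideanSpace.single i 1) y
    simp only [map_one, one_mul, starRingEnd_apply, star_one] at h1
    rw [← h1, h2]
  have key : ∀ j : Fin v, ∃ y ∈ K, ∀ i : Fin f,
      1 - ⟪h i, V j⟫ - (ContinuousLinearMap.adjoint A y) i = 0 := by
    intro j
    refine ⟨B (EuclideanSpace.single j 1), hB j, fun i => ?_⟩
    rw [hadj, ← hfact i j]; ring
  refine ⟨key, ?_⟩
  -- the intermediate convex set
  set C : Set (EuclideanSpace ℝ (Fin n)) :=
    {x | ∃ y ∈ K, ∀ i : Fin f, 1 - ⟪h i, x⟫ - (ContinuousLinearMap.adjoint A y) i = 0}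
    with hC
  have hCconv : Convex ℝ C := by
    rintro x₁ ⟨y₁, hy₁, hz₁⟩ x₂ ⟨y₂, hy₂, hz₂⟩ a b ha hb hab
    refine ⟨a • y₁ + b • y₂, hKconv hy₁ hy₂ ha hb hab, fun i => ?_⟩
    have e1 := hz₁ i
    have e2 := hz₂ i
    simp only [inner_add_right, inner_smul_right, map_add, map_smul,
      PiLp.add_apply, PiLp.smul_apply, smul_eq_mul] at *
    nlinarith [e1, e2]
  have hVC : Set.range V ⊆ C := by
    rintro _ ⟨j, rfl⟩
    exact key j
  have hhull : convexHull ℝ (Set.range V) ⊆ C := convexHull_min hVC hCconv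
  ext x
  constructor
  · rintro ⟨y, hy, hz⟩
    intro i
    -- nonnegativity of all coordinates of z
    set z : EuclideanSpace ℝ (Fin f) :=
      WithLp.toLp 2 (fun i => 1 - ⟪h i, x⟫ - (ContinuousLinearMap.adjoint A y) i) with hzdef
    have hzmem : Real.sqrt ((f : ℝ) - 1) * ‖z‖ ≤ ∑ i, z i := hz
    have hnonneg : ∀ k : Fin f, 0 ≤ z k := by
      intro k
      by_contra hk
      push_neg at hk
      have hf1 : (1 : ℝ) ≤ f := by exact_mod_cast k.pos
      set s := Finset.univ.erase k with hs
      have hcard : (s.card : ℝ) = (f : ℝ) - 1 := by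
        have hc : s.card = f - 1 := by
          simp [hs, Finset.card_erase_of_mem]
        rw [hc, Nat.cast_sub k.pos]; simp
      have hCS : (∑ i ∈ s, z i) ^ 2 ≤ (s.card : ℝ) * ∑ i ∈ s, z i ^ 2 :=
        sq_sum_le_card_mul_sum_sq
      have hnormsq : ∑ i ∈ s, z i ^ 2 ≤ ‖z‖ ^ 2 := by
        have hn : ‖z‖ ^ 2 = ∑ i, z i ^ 2 := by
          rw [EuclideanSpace.norm_eq, Real.sq_sqrt (by positivity)]
          simp [Real.norm_eq_abs, sq_abs]
        rw [hn]
        exact Finset.sum_le_sum_of_subset_of_nonneg (Finset.subset_univ s)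
          (fun i _ _ => sq_nonneg _)
      have h3 : (∑ i ∈ s, z i) ^ 2 ≤ ((f : ℝ) - 1) * ‖z‖ ^ 2 := by
        calc (∑ i ∈ s, z i) ^ 2 ≤ (s.card : ℝ) * ∑ i ∈ s, z i ^ 2 := hCS
          _ ≤ ((f : ℝ) - 1) * ‖z‖ ^ 2 := by
              rw [hcard]
              exact mul_le_mul_of_nonneg_left hnormsq (by linarith)
      have h2 : ∑ i ∈ s, z i ≤ Real.sqrt ((f : ℝ) - 1) * ‖z‖ := by
        calc ∑ i ∈ s, z i ≤ |∑ i ∈ s, z i| := le_abs_self _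
          _ = Real.sqrt ((∑ i ∈ s, z i) ^ 2) := (Real.sqrt_sq_eq_abs _).symm
          _ ≤ Real.sqrt (((f : ℝ) - 1) * ‖z‖ ^ 2) := Real.sqrt_le_sqrt h3
          _ = Real.sqrt ((f : ℝ) - 1) * ‖z‖ := by
              rw [Real.sqrt_mul (by linarith), Real.sqrt_sq (norm_nonneg _)]
      have hsum : ∑ i, z i = z k + ∑ i ∈ s, z i :=
        (Finset.add_sum_erase _ _ (Finset.mem_univ k)).symm
      linarith [hzmem]
    have hAy : 0 ≤ (ContinuousLinearMap.adjoint A y) i := by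
      rw [hadj]; exact hA i y hy
    have := hnonneg i
    simp only [hzdef, PiLp.toLp_apply] at this
    linarith
  · intro hx
    have hxC : x ∈ C := hhull (hPV ▸ hx)
    obtain ⟨y, hy, hz⟩ := hxC
    refine ⟨y, hy, ?_⟩
    have hz0 : (WithLp.toLp 2 (fun i => 1 - ⟪h i, x⟫ - (ContinuousLinearMap.adjoint A y) i) :
        EuclideanSpace ℝ (Fin f)) = 0 := by ext i; exact hz i
    simp only [Set.mem_setOf_eq]
    rw [hz0]
    show Real.sqrt ((f : ℝ) - 1) * ‖(0 : EuclideanSpace ℝ (Fin f))‖ ≤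
      ∑ i, (1 - ⟪h i, x⟫ - (ContinuousLinearMap.adjoint A y) i)
    rw [norm_zero, mul_zero]
    refine Finset.sum_nonneg fun i _ => le_of_eq ?_
    exact (hz i).symm
end

section
/- If 0 is in the interior of polytope P, then Out_P(B) = {Vz : z ∈ O_out^v, 𝟙ᵀz ≤ 1, Bz ∈ K} equals {Vz : z ∈ O_out^v, 𝟙ᵀz = 1, Bz ∈ K}, i.e., the inequality 𝟙ᵀz ≤ 1 may be replaced by equality. -/
lemma cone_add_mem {m : ℕ} (K : Set (EuclideanSpace ℝ (Fin m)))
    (hKconv : Convex ℝ K)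
    (hKcone : ∀ c : ℝ, 0 ≤ c → ∀ y ∈ K, c • y ∈ K)
    {a b : EuclideanSpace ℝ (Fin m)} (ha : a ∈ K) (hb : b ∈ K) : a + b ∈ K := by
  have h := hKconv ha hb (by norm_num : (0:ℝ) ≤ 1/2) (by norm_num : (0:ℝ) ≤ 1/2) (by norm_num)
  have h2 := hKcone 2 (by norm_num) _ h
  have : (2:ℝ) • ((1/2:ℝ) • a + (1/2:ℝ) • b) = a + b := by
    rw [smul_add, smul_smul, smul_smul]; norm_num
  rwa [this] at h2

lemma norm_le_sum_of_nonneg {v : ℕ} (x : EuclideanSpace ℝ (Fin v))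
    (hx : ∀ j, 0 ≤ x j) : ‖x‖ ≤ ∑ j, x j := by
  rw [EuclideanSpace.norm_eq]
  have h1 : ∀ j : Fin v, ‖x j‖ ^ 2 = x j ^ 2 := fun j => by rw [Real.norm_eq_abs, sq_abs]
  rw [show ∑ j, ‖x j‖ ^ 2 = ∑ j, x j ^ 2 from Finset.sum_congr rfl (fun j _ => h1 j)]
  have hsum : (0:ℝ) ≤ ∑ j, x j := Finset.sum_nonneg fun j _ => hx j
  rw [show (∑ j, x j) = Real.sqrt ((∑ j, x j)^2) from (Real.sqrt_sq hsum).symm]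
  apply Real.sqrt_le_sqrt
  rw [sq, Finset.sum_mul]
  apply Finset.sum_le_sum
  intro i _
  rw [sq]
  exact mul_le_mul_of_nonneg_left
    (Finset.single_le_sum (fun j _ => hx j) (Finset.mem_univ i)) (hx i)

theorem out_eq_slice (n v m : ℕ)
    (V : Fin v → EuclideanSpace ℝ (Fin n))
    (lam : Fin v → ℝ) (hlam0 : ∀ j, 0 ≤ lam j) (hlam1 : ∑ j, lam j = 1)
    (hlamV : ∑ j, lam j • V j = 0)
    (K : Set (EuclideanSpace ℝ (Fin m)))
    (hKconv : Convex ℝ K)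
    (hKcone : ∀ c : ℝ, 0 ≤ c → ∀ y ∈ K, c • y ∈ K)
    (B : EuclideanSpace ℝ (Fin v) →L[ℝ] EuclideanSpace ℝ (Fin m))
    (hB : ∀ j : Fin v, B (EuclideanSpace.single j 1) ∈ K) :
    {x : EuclideanSpace ℝ (Fin n) | ∃ z : EuclideanSpace ℝ (Fin v),
        ‖z‖ ≤ ∑ j, z j ∧ (∑ j, z j) ≤ 1 ∧ B z ∈ K ∧ x = ∑ j, z j • V j} =
    {x : EuclideanSpace ℝ (Fin n) | ∃ z : EuclideanSpace ℝ (Fin v),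
        ‖z‖ ≤ ∑ j, z j ∧ (∑ j, z j) = 1 ∧ B z ∈ K ∧ x = ∑ j, z j • V j} := by
  apply Set.Subset.antisymm
  · rintro x ⟨z, hnorm, hle, hBz, hx⟩
    set s := ∑ j, z j with hs
    have hs0 : 0 ≤ s := le_trans (norm_nonneg z) hnorm
    set lamE : EuclideanSpace ℝ (Fin v) := WithLp.toLp 2 (lam : Fin v → ℝ) with hlamE
    set z' : EuclideanSpace ℝ (Fin v) := z + (1 - s) • lamE with hz'
    have hz'j : ∀ j, z' j = z j + (1 - s) * lam j := fun j => rfl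
    have hsum' : ∑ j, z' j = 1 := by
      simp only [hz'j]
      rw [Finset.sum_add_distrib, ← Finset.mul_sum, hlam1, ← hs]
      ring
    refine ⟨z', ?_, hsum', ?_, ?_⟩
    · rw [hsum']
      calc ‖z'‖ ≤ ‖z‖ + ‖(1 - s) • lamE‖ := norm_add_le _ _
        _ ≤ s + (1 - s) * 1 := by
            apply add_le_add hnorm
            rw [norm_smul, Real.norm_eq_abs, abs_of_nonneg (by linarith)]
            apply mul_le_mul_of_nonneg_left _ (by linarith)
            exact (norm_le_sum_of_nonneg lamE hlam0).trans_eq hlam1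
        _ = 1 := by ring
    · have hlamsum : lamE = ∑ j, lam j • EuclideanSpace.single j (1:ℝ) := by
        ext i
        rw [show (∑ j, lam j • EuclideanSpace.single j (1:ℝ)) i
            = ∑ j, (lam j • EuclideanSpace.single j (1:ℝ)) i from
          by rw [WithLp.ofLp_sum]; exact Finset.sum_apply i _ _]
        simp [EuclideanSpace.single_apply, hlamE]
      have hBlam : B lamE ∈ K := by
        rw [hlamsum, map_sum]
        simp_rw [map_smul]
        exact hKconv.sum_mem (fun j _ => hlam0 j) hlam1 (fun j _ => hB j)
      have hBz' : B z' = B z + (1 - s) • B lamE := by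
        rw [hz', map_add, map_smul]
      rw [hBz']
      exact cone_add_mem K hKconv hKcone hBz (hKcone _ (by linarith) _ hBlam)
    · rw [hx]
      have hsplit : ∑ j, z' j • V j
          = ∑ j, z j • V j + (1 - s) • ∑ j, lam j • V j := by
        rw [Finset.smul_sum, ← Finset.sum_add_distrib]
        apply Finset.sum_congr rfl
        intro j _
        rw [hz'j, add_smul, smul_smul]
      rw [hsplit, hlamV, smul_zero, add_zero]
  · rintro x ⟨z, hnorm, heq, hBz, hx⟩
    exact ⟨z, hnorm, heq.le, hBz, hx⟩
end

section
/- Let P = {x : Hᵀx ≤ 𝟙} be a polytope with 0 in its interior, A a nonnegative K*-map such that Inn_P(A) is closed and has nonempty interior. Then the polar of Inn_P(A) equals Out_{P°}(A) = {Hp : p ∈ O_out^f, 𝟙ᵀp ≤ 1, Ap ∈ K*}, where P° is the polar polytope of P (whose vertices are the columns of H). -/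
open RealInnerProductSpace

set_option maxHeartbeats 800000

noncomputable def oneE (f : ℕ) : EuclideanSpace ℝ (Fin f) := WithLp.toLp 2 (fun _ => 1)
variable {f : ℕ}
lemma inner_one_eq_sum (z : EuclideanSpace ℝ (Fin f)) :
    ⟪oneE f, z⟫ = ∑ i, z i := by
  simp [oneE, PiLp.inner_apply, RCLike.inner_apply]
lemma inner_one_eq_sum' (z : EuclideanSpace ℝ (Fin f)) :
    ⟪z, oneE f⟫ = ∑ i, z i := by
  rw [real_inner_comm, inner_one_eq_sum]
lemma sum_oneE : ∑ i, oneE f i = (f : ℝ) := by simp [oneE]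
lemma inner_eq_sum {f : ℕ} (p z : EuclideanSpace ℝ (Fin f)) : ⟪p, z⟫ = ∑ i, p i * z i := by
  simp [PiLp.inner_apply, RCLike.inner_apply, mul_comm]

lemma norm_one_sq : ‖oneE f‖ ^ 2 = f := by
  rw [← real_inner_self_eq_norm_sq, inner_one_eq_sum, sum_oneE]
def Oin (f : ℕ) : Set (EuclideanSpace ℝ (Fin f)) :=
  {z | Real.sqrt ((f : ℝ) - 1) * ‖z‖ ≤ ∑ i, z i}
lemma sum_nonneg_of_mem_Oin {z : EuclideanSpace ℝ (Fin f)} (hz : z ∈ Oin f) :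
    0 ≤ ∑ i, z i := le_trans (by positivity) hz
lemma sq_of_mem_Oin {z : EuclideanSpace ℝ (Fin f)} (hz : z ∈ Oin f) :
    ((f : ℝ) - 1) * ‖z‖ ^ 2 ≤ (∑ i, z i) ^ 2 := by
  rcases le_or_gt ((f : ℝ) - 1) 0 with hf | hf
  · have : ((f : ℝ) - 1) * ‖z‖ ^ 2 ≤ 0 := mul_nonpos_of_nonpos_of_nonneg hf (by positivity)
    exact this.trans (by positivity)
  · have h0 : 0 ≤ Real.sqrt ((f : ℝ) - 1) * ‖z‖ := by positivity
    have h2 := pow_le_pow_left₀ h0 hz 2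
    calc ((f : ℝ) - 1) * ‖z‖ ^ 2 = (Real.sqrt ((f : ℝ) - 1) * ‖z‖) ^ 2 := by
          rw [mul_pow, Real.sq_sqrt hf.le]
      _ ≤ (∑ i, z i) ^ 2 := h2

lemma inner_nonneg_pairing {p z : EuclideanSpace ℝ (Fin f)}
    (hp : ‖p‖ ≤ ∑ i, p i) (hz : z ∈ Oin f) : 0 ≤ ⟪p, z⟫ := by
  rcases Nat.eq_zero_or_pos f with hf | hf
  · subst hf
    have : p = 0 := Subsingleton.elim _ _
    simp [this]
  · have hf1 : (1:ℝ) ≤ (f:ℝ) := by exact_mod_cast hf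
    have hfpos : (0:ℝ) < (f:ℝ) := by linarith
    set s := ∑ i, p i with hs
    set σ := ∑ i, z i with hσ
    have hs0 : 0 ≤ s := (norm_nonneg p).trans hp
    have hσ0 : 0 ≤ σ := sum_nonneg_of_mem_Oin hz
    have hz2 : ((f:ℝ)-1) * ‖z‖^2 ≤ σ^2 := sq_of_mem_Oin hz
    have hp2 : ‖p‖^2 ≤ s^2 := pow_le_pow_left₀ (norm_nonneg p) hp 2
    set P : EuclideanSpace ℝ (Fin f) := (f:ℝ)•p - s•oneE f with hP
    set Z : EuclideanSpace ℝ (Fin f) := (f:ℝ)•z - σ•oneE f with hZ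
    have hPZ : ⟪P, Z⟫ = (f:ℝ)^2*⟪p,z⟫ - (f:ℝ)*s*σ := by
      rw [hP, hZ]
      simp only [inner_sub_left, inner_sub_right, real_inner_smul_left, real_inner_smul_right,
        inner_one_eq_sum, inner_one_eq_sum', sum_oneE, ← hs, ← hσ]
      ring
    have hPn : ‖P‖^2 = (f:ℝ)^2*‖p‖^2 - (f:ℝ)*s^2 := by
      rw [← real_inner_self_eq_norm_sq, hP]
      simp only [inner_sub_left, inner_sub_right, real_inner_smul_left, real_inner_smul_right,
        inner_one_eq_sum, inner_one_eq_sum', sum_oneE, real_inner_self_eq_norm_sq,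
        norm_smul, Real.norm_eq_abs, mul_pow, sq_abs, norm_one_sq, ← hs]
      ring
    have hZn : ‖Z‖^2 = (f:ℝ)^2*‖z‖^2 - (f:ℝ)*σ^2 := by
      rw [← real_inner_self_eq_norm_sq, hZ]
      simp only [inner_sub_left, inner_sub_right, real_inner_smul_left, real_inner_smul_right,
        inner_one_eq_sum, inner_one_eq_sum', sum_oneE, real_inner_self_eq_norm_sq,
        norm_smul, Real.norm_eq_abs, mul_pow, sq_abs, norm_one_sq, ← hσ]
      ring
    have hPb : ‖P‖^2 ≤ (f:ℝ)*s^2*((f:ℝ)-1) := by nlinarith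
    have hZb : ((f:ℝ)-1)*‖Z‖^2 ≤ (f:ℝ)*σ^2 := by nlinarith
    have hCS : |⟪P, Z⟫| ≤ ‖P‖*‖Z‖ := abs_real_inner_le_norm P Z
    have key : ‖P‖*‖Z‖ ≤ (f:ℝ)*s*σ := by
      rcases eq_or_lt_of_le hf1 with heq | hlt
      · have hf0 : (f:ℝ) - 1 = 0 := by linarith
        rw [hf0, mul_zero] at hPb
        have hP0 : ‖P‖ = 0 := by
          have h2 : ‖P‖^2 = 0 := le_antisymm hPb (by positivity)
          exact (pow_eq_zero_iff two_ne_zero).mp h2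
        rw [hP0, zero_mul]
        positivity
      · have hfm : (0:ℝ) < (f:ℝ) - 1 := by linarith
        have hsq : (‖P‖*‖Z‖)^2 ≤ ((f:ℝ)*s*σ)^2 := by
          have hm : ‖P‖^2 * (((f:ℝ)-1) * ‖Z‖^2) ≤ ((f:ℝ)*s^2*((f:ℝ)-1)) * ((f:ℝ)*σ^2) :=
            mul_le_mul hPb hZb (mul_nonneg hfm.le (by positivity))
              (mul_nonneg (mul_nonneg hfpos.le (by positivity)) hfm.le)
          nlinarith [hm, hfm]
        nlinarith [hsq, norm_nonneg P, norm_nonneg Z, mul_nonneg (norm_nonneg P) (norm_nonneg Z),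
          mul_nonneg (mul_nonneg hfpos.le hs0) hσ0]
    nlinarith [hCS, key, neg_abs_le ⟪P, Z⟫, mul_pos hfpos hfpos]

lemma mem_Oin_of_sq {f : ℕ} (hf : 1 ≤ f) {z : EuclideanSpace ℝ (Fin f)}
    (h1 : 0 ≤ ∑ i, z i) (h2 : ((f : ℝ) - 1) * ‖z‖ ^ 2 ≤ (∑ i, z i) ^ 2) :
    z ∈ Oin f := by
  have hf' : (0 : ℝ) ≤ (f : ℝ) - 1 := by
    have : (1 : ℝ) ≤ (f : ℝ) := by exact_mod_cast hf
    linarith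
  have e : Real.sqrt ((f : ℝ) - 1) * ‖z‖ = Real.sqrt (((f : ℝ) - 1) * ‖z‖ ^ 2) := by
    rw [Real.sqrt_mul hf', Real.sqrt_sq (norm_nonneg z)]
  rw [Oin, Set.mem_setOf_eq, e]
  calc Real.sqrt (((f : ℝ) - 1) * ‖z‖ ^ 2) ≤ Real.sqrt ((∑ i, z i) ^ 2) :=
        Real.sqrt_le_sqrt h2
    _ = ∑ i, z i := Real.sqrt_sq h1

lemma zero_mem_Oin {f : ℕ} : (0 : EuclideanSpace ℝ (Fin f)) ∈ Oin f := by
  simp [Oin]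

lemma one_mem_Oin {f : ℕ} : oneE f ∈ Oin f := by
  rcases Nat.eq_zero_or_pos f with hf | hf
  · subst hf
    have h0 : oneE 0 = (0 : EuclideanSpace ℝ (Fin 0)) := Subsingleton.elim _ _
    rw [h0]; exact zero_mem_Oin
  · refine mem_Oin_of_sq hf ?_ ?_
    · rw [sum_oneE]; positivity
    · rw [norm_one_sq, sum_oneE]
      have hf' : (1:ℝ) ≤ (f:ℝ) := by exact_mod_cast hf
      nlinarith


lemma mem_Oout_of_dual {p : EuclideanSpace ℝ (Fin f)}
    (hp : ∀ z ∈ Oin f, 0 ≤ ⟪z, p⟫) : ‖p‖ ≤ ∑ i, p i := by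
  rcases Nat.eq_zero_or_pos f with hf | hf
  · subst hf
    have : p = 0 := Subsingleton.elim _ _
    simp [this]
  · have hf1 : (1:ℝ) ≤ (f:ℝ) := by exact_mod_cast hf
    have hfpos : (0:ℝ) < (f:ℝ) := by linarith
    set s := ∑ i, p i with hs
    have hs0 : 0 ≤ s := by
      have := hp (oneE f) one_mem_Oin
      rwa [inner_one_eq_sum] at this
    set P : EuclideanSpace ℝ (Fin f) := (f:ℝ)•p - s•oneE f with hP
    have hPn : ‖P‖^2 = (f:ℝ)^2*‖p‖^2 - (f:ℝ)*s^2 := by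
      rw [← real_inner_self_eq_norm_sq, hP]
      simp only [inner_sub_left, inner_sub_right, real_inner_smul_left, real_inner_smul_right,
        inner_one_eq_sum, inner_one_eq_sum', sum_oneE, real_inner_self_eq_norm_sq,
        norm_smul, Real.norm_eq_abs, mul_pow, sq_abs, norm_one_sq, ← hs]
      ring
    have hPsum : ∑ i, P i = 0 := by
      rw [← inner_one_eq_sum, hP]
      simp only [inner_sub_right, real_inner_smul_right, inner_one_eq_sum, sum_oneE,
        real_inner_self_eq_norm_sq, norm_one_sq, ← hs]
      ring
    have hPp : ⟪P, p⟫ = (f:ℝ)*‖p‖^2 - s^2 := by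
      rw [hP]
      simp only [inner_sub_left, real_inner_smul_left, inner_one_eq_sum,
        real_inner_self_eq_norm_sq, ← hs]
      ring
    set a := Real.sqrt ((f:ℝ)-1) * ‖P‖ with ha
    have ha0 : 0 ≤ a := by positivity
    have ha2 : a^2 = ((f:ℝ)-1) * ‖P‖^2 := by
      rw [ha, mul_pow, Real.sq_sqrt (by linarith : (0:ℝ) ≤ (f:ℝ)-1)]
    have hb2 : Real.sqrt (f:ℝ) ^ 2 = (f:ℝ) := Real.sq_sqrt hfpos.le
    set z : EuclideanSpace ℝ (Fin f) := a • oneE f - Real.sqrt (f:ℝ) • P with hz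
    have hzsum : ∑ i, z i = a * f := by
      rw [← inner_one_eq_sum, hz, inner_sub_right, real_inner_smul_right, real_inner_smul_right,
        inner_one_eq_sum, inner_one_eq_sum, hPsum, sum_oneE]
      ring
    have hzn : ‖z‖^2 = a^2 * f + ((f:ℝ)) * ‖P‖^2 := by
      rw [hz, norm_sub_sq_real, real_inner_smul_left, real_inner_smul_right, inner_one_eq_sum,
        hPsum, norm_smul, norm_smul, Real.norm_eq_abs, Real.norm_eq_abs, mul_pow, mul_pow,
        sq_abs, sq_abs, norm_one_sq, hb2]
      ring
    have hzOin : z ∈ Oin f := by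
      refine mem_Oin_of_sq hf (by rw [hzsum]; positivity) ?_
      rw [hzsum, hzn]
      nlinarith [ha2, norm_nonneg P]
    have hkey := hp z hzOin
    rw [hz, inner_sub_left, real_inner_smul_left, real_inner_smul_left, inner_one_eq_sum,
      hPp, ← hs] at hkey
    -- hkey : 0 ≤ a * s - √f * (f*‖p‖² - s²)
    set β := Real.sqrt ((f:ℝ)-1) * Real.sqrt f with hβ
    have hβ0 : 0 ≤ β := by positivity
    have hβ2 : β^2 = ((f:ℝ)-1) * f := by
      rw [hβ, mul_pow, Real.sq_sqrt (by linarith : (0:ℝ) ≤ (f:ℝ)-1), Real.sq_sqrt hfpos.le]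
    have h1 : Real.sqrt (f:ℝ) * (Real.sqrt (f:ℝ) * ((f:ℝ)*‖p‖^2 - s^2)) ≤
        Real.sqrt (f:ℝ) * (a * s) := by
      have hx : Real.sqrt (f:ℝ) * ((f:ℝ)*‖p‖^2 - s^2) ≤ a * s := by linarith
      exact mul_le_mul_of_nonneg_left hx (Real.sqrt_nonneg _)
    have hsq : Real.sqrt (f:ℝ) * Real.sqrt (f:ℝ) = (f:ℝ) := Real.mul_self_sqrt hfpos.le
    have h2 : (f:ℝ) * ((f:ℝ)*‖p‖^2 - s^2) ≤ β * (‖P‖ * s) := by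
      rw [← mul_assoc, hsq] at h1
      calc (f:ℝ) * ((f:ℝ)*‖p‖^2 - s^2) ≤ Real.sqrt (f:ℝ) * (a * s) := h1
        _ = β * (‖P‖ * s) := by rw [ha, hβ]; ring
    have hkey2 : ‖P‖^2 ≤ β * (‖P‖ * s) := by nlinarith [h2, hPn]
    have hP2 : ‖P‖^2 ≤ s^2 * (((f:ℝ)-1) * f) := by
      nlinarith [hkey2, sq_nonneg (‖P‖ - s*β), hβ2, mul_nonneg hs0 hβ0]
    have : ‖p‖^2 ≤ s^2 := by nlinarith [hP2, hPn]
    nlinarith [this, norm_nonneg p, hs0]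

lemma exists_ball_Oin (f : ℕ) :
    ∃ ε > (0:ℝ), ∀ e : EuclideanSpace ℝ (Fin f), ‖e‖ < ε → oneE f + e ∈ Oin f := by
  rcases Nat.eq_zero_or_pos f with hf | hf
  · subst hf
    refine ⟨1, one_pos, fun e _ => ?_⟩
    have : oneE 0 + e = (0 : EuclideanSpace ℝ (Fin 0)) := Subsingleton.elim _ _
    rw [this]; exact zero_mem_Oin
  · have hf' : (1:ℝ) ≤ (f:ℝ) := by exact_mod_cast hf
    have hcont : Continuous fun z : EuclideanSpace ℝ (Fin f) =>
        Real.sqrt ((f:ℝ)-1) * ‖z‖ - ∑ i, z i := by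
      refine (continuous_const.mul continuous_norm).sub ?_
      exact continuous_finset_sum _ fun i _ => (EuclideanSpace.proj (𝕜 := ℝ) i).continuous
    have hopen : IsOpen {z : EuclideanSpace ℝ (Fin f) |
        Real.sqrt ((f:ℝ)-1) * ‖z‖ - ∑ i, z i < 0} :=
      isOpen_lt hcont continuous_const
    have hone : oneE f ∈ {z : EuclideanSpace ℝ (Fin f) |
        Real.sqrt ((f:ℝ)-1) * ‖z‖ - ∑ i, z i < 0} := by
      have hs : ∑ i, oneE f i = (f : ℝ) := sum_oneE
      have h1 : (Real.sqrt ((f : ℝ) - 1) * ‖oneE f‖) ^ 2 = ((f:ℝ) - 1) * f := by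
        rw [mul_pow, Real.sq_sqrt (by linarith), norm_one_sq]
      have h2 : 0 ≤ Real.sqrt ((f : ℝ) - 1) * ‖oneE f‖ := by positivity
      simp only [Set.mem_setOf_eq, hs]
      nlinarith
    obtain ⟨ε, hε, hball⟩ := Metric.isOpen_iff.mp hopen _ hone
    refine ⟨ε, hε, fun e he => ?_⟩
    have : oneE f + e ∈ Metric.ball (oneE f) ε := by
      rw [Metric.mem_ball, dist_eq_norm, add_sub_cancel_left]
      exact he
    have := hball this
    rw [Set.mem_setOf_eq] at this
    rw [Oin, Set.mem_setOf_eq]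
    linarith

lemma Oin_add {f : ℕ} {z₁ z₂ : EuclideanSpace ℝ (Fin f)} (h₁ : z₁ ∈ Oin f) (h₂ : z₂ ∈ Oin f) :
    z₁ + z₂ ∈ Oin f := by
  have key : Real.sqrt ((f : ℝ) - 1) * ‖z₁ + z₂‖ ≤
      Real.sqrt ((f : ℝ) - 1) * ‖z₁‖ + Real.sqrt ((f : ℝ) - 1) * ‖z₂‖ := by
    rw [← mul_add]
    exact mul_le_mul_of_nonneg_left (norm_add_le _ _) (Real.sqrt_nonneg _)
  refine key.trans ?_
  have hsum : ∑ i, (z₁ + z₂) i = (∑ i, z₁ i) + ∑ i, z₂ i := by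
    simp [Finset.sum_add_distrib]
  rw [hsum]
  exact add_le_add h₁ h₂

lemma Oin_smul {f : ℕ} {c : ℝ} (hc : 0 ≤ c) {z : EuclideanSpace ℝ (Fin f)} (hz : z ∈ Oin f) :
    c • z ∈ Oin f := by
  have h1 : ‖c • z‖ = c * ‖z‖ := by rw [norm_smul, Real.norm_eq_abs, abs_of_nonneg hc]
  have h2 : ∑ i, (c • z) i = c * ∑ i, z i := by simp [Finset.mul_sum]
  rw [Oin, Set.mem_setOf_eq, h1, h2, mul_left_comm]
  exact mul_le_mul_of_nonneg_left hz hc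
theorem polar_of_inn (n f m : ℕ)
    (h : Fin f → EuclideanSpace ℝ (Fin n))
    (hP0 : (0 : EuclideanSpace ℝ (Fin n)) ∈
      interior {x : EuclideanSpace ℝ (Fin n) | ∀ i, ⟪h i, x⟫ ≤ 1})
    (K : Set (EuclideanSpace ℝ (Fin m)))
    (hKclosed : IsClosed K) (hKconv : Convex ℝ K)
    (hKcone : ∀ c : ℝ, 0 ≤ c → ∀ y ∈ K, c • y ∈ K)
    (A : EuclideanSpace ℝ (Fin f) →L[ℝ] EuclideanSpace ℝ (Fin m))
    (hA : ∀ i : Fin f, A (EuclideanSpace.single i 1) ∈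
      {w : EuclideanSpace ℝ (Fin m) | ∀ y ∈ K, 0 ≤ ⟪w, y⟫})
    (hInnClosed : IsClosed {x : EuclideanSpace ℝ (Fin n) | ∃ y ∈ K,
        (WithLp.toLp 2 (fun i => 1 - ⟪h i, x⟫ - (ContinuousLinearMap.adjoint A y) i) :
          EuclideanSpace ℝ (Fin f)) ∈
        {z : EuclideanSpace ℝ (Fin f) | Real.sqrt ((f : ℝ) - 1) * ‖z‖ ≤ ∑ i, z i}})
    (hInnInt : (interior {x : EuclideanSpace ℝ (Fin n) | ∃ y ∈ K,
        (WithLp.toLp 2 (fun i => 1 - ⟪h i, x⟫ - (ContinuousLinearMap.adjoint A y) i) :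
          EuclideanSpace ℝ (Fin f)) ∈
        {z : EuclideanSpace ℝ (Fin f) | Real.sqrt ((f : ℝ) - 1) * ‖z‖ ≤ ∑ i, z i}}).Nonempty) :
    {w : EuclideanSpace ℝ (Fin n) | ∀ x ∈
        {x : EuclideanSpace ℝ (Fin n) | ∃ y ∈ K,
          (WithLp.toLp 2 (fun i => 1 - ⟪h i, x⟫ - (ContinuousLinearMap.adjoint A y) i) :
            EuclideanSpace ℝ (Fin f)) ∈
          {z : EuclideanSpace ℝ (Fin f) | Real.sqrt ((f : ℝ) - 1) * ‖z‖ ≤ ∑ i, z i}},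
        ⟪w, x⟫ ≤ 1} =
    {w : EuclideanSpace ℝ (Fin n) | ∃ p : EuclideanSpace ℝ (Fin f),
        ‖p‖ ≤ ∑ i, p i ∧ (∑ i, p i) ≤ 1 ∧
        A p ∈ {u : EuclideanSpace ℝ (Fin m) | ∀ y ∈ K, 0 ≤ ⟪u, y⟫} ∧
        w = ∑ i, p i • h i} := by
  classical
  obtain ⟨x₀, hx₀⟩ := hInnInt
  obtain ⟨y₀, hy₀K, -⟩ := interior_subset hx₀
  have hK0 : (0 : EuclideanSpace ℝ (Fin m)) ∈ K := by
    have := hKcone 0 le_rfl y₀ hy₀K; simpa using this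
  have hKadd : ∀ y₁ ∈ K, ∀ y₂ ∈ K, y₁ + y₂ ∈ K := by
    intro y₁ h₁ y₂ h₂
    have hmid : (1/2 : ℝ) • y₁ + (1/2 : ℝ) • y₂ ∈ K :=
      hKconv h₁ h₂ (by norm_num) (by norm_num) (by norm_num)
    have h2 := hKcone 2 (by norm_num) _ hmid
    rwa [smul_add, smul_smul, smul_smul, (by norm_num : (2:ℝ) * (1/2) = 1), one_smul, one_smul] at h2
  ext w
  simp only [Set.mem_setOf_eq]
  constructor
  · -- hard direction
    intro hw
    set B : Set (EuclideanSpace ℝ (Fin f)) :=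
      {p | (‖p‖ ≤ ∑ i, p i) ∧ ((∑ i, p i) ≤ 1) ∧ ∀ y ∈ K, 0 ≤ ⟪A p, y⟫} with hB
    set T : Set (EuclideanSpace ℝ (Fin n)) :=
      (fun p : EuclideanSpace ℝ (Fin f) => ∑ i, p i • h i) '' B with hT
    suffices hwT : w ∈ T by
      obtain ⟨p, hpB, hpw⟩ := hwT
      exact ⟨p, hpB.1, hpB.2.1, hpB.2.2, hpw.symm⟩
    by_contra hwT
    have hsum_cont : Continuous fun p : EuclideanSpace ℝ (Fin f) => ∑ i, p i :=
      continuous_finset_sum _ fun i _ => (EuclideanSpace.proj (𝕜 := ℝ) i).continuous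
    have hBclosed : IsClosed B := by
      have hBeq : B = {p : EuclideanSpace ℝ (Fin f) | ‖p‖ ≤ ∑ i, p i} ∩
          ({p | (∑ i, p i) ≤ 1} ∩ ⋂ y ∈ K, {p | 0 ≤ ⟪A p, y⟫}) := by
        ext p; simp only [hB, Set.mem_setOf_eq, Set.mem_inter_iff, Set.mem_iInter]
      rw [hBeq]
      exact (isClosed_le continuous_norm hsum_cont).inter
        ((isClosed_le hsum_cont continuous_const).inter
          (isClosed_biInter fun y _ =>
            isClosed_le continuous_const (Continuous.inner A.continuous continuous_const)))
    have hBbdd : B ⊆ Metric.closedBall 0 1 := by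
      intro p hp
      rw [Metric.mem_closedBall, dist_zero_right]
      exact hp.1.trans hp.2.1
    have hBcompact : IsCompact B :=
      (isCompact_closedBall (0 : EuclideanSpace ℝ (Fin f)) 1).of_isClosed_subset hBclosed hBbdd
    have hmap_cont : Continuous fun p : EuclideanSpace ℝ (Fin f) => ∑ i, p i • h i :=
      continuous_finset_sum _ fun i _ =>
        ((EuclideanSpace.proj (𝕜 := ℝ) i).continuous).smul continuous_const
    have hTcompact : IsCompact T := hBcompact.image hmap_cont
    have hBconv : Convex ℝ B := by
      intro p hp q hq a bb ha hb hab
      have hsum_eq : ∑ i, (a • p + bb • q) i = a * (∑ i, p i) + bb * (∑ i, q i) := by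
        simp [Finset.sum_add_distrib, Finset.mul_sum]
      refine ⟨?_, ?_, ?_⟩
      · rw [hsum_eq]
        calc ‖a • p + bb • q‖ ≤ ‖a • p‖ + ‖bb • q‖ := norm_add_le _ _
          _ = a * ‖p‖ + bb * ‖q‖ := by
              rw [norm_smul, norm_smul, Real.norm_eq_abs, Real.norm_eq_abs,
                abs_of_nonneg ha, abs_of_nonneg hb]
          _ ≤ a * (∑ i, p i) + bb * (∑ i, q i) :=
              add_le_add (mul_le_mul_of_nonneg_left hp.1 ha)
                (mul_le_mul_of_nonneg_left hq.1 hb)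
      · rw [hsum_eq]
        calc a * (∑ i, p i) + bb * (∑ i, q i) ≤ a * 1 + bb * 1 :=
              add_le_add (mul_le_mul_of_nonneg_left hp.2.1 ha)
                (mul_le_mul_of_nonneg_left hq.2.1 hb)
          _ = 1 := by rw [mul_one, mul_one, hab]
      · intro y hy
        have h1 := hp.2.2 y hy
        have h2 := hq.2.2 y hy
        rw [map_add, map_smul, map_smul, inner_add_left, real_inner_smul_left,
          real_inner_smul_left]
        exact add_nonneg (mul_nonneg ha h1) (mul_nonneg hb h2)
    have hTconv : Convex ℝ T := by
      refine hBconv.is_linear_image ⟨fun p q => ?_, fun cc p => ?_⟩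
      · simp [add_smul, Finset.sum_add_distrib]
      · simp [mul_smul, Finset.smul_sum]
    obtain ⟨φ, c, hTlt, hcw⟩ := geometric_hahn_banach_closed_point hTconv hTcompact.isClosed hwT
    set x : EuclideanSpace ℝ (Fin n) := (InnerProductSpace.toDual ℝ _).symm φ with hx
    have hφ : ∀ u, φ u = ⟪x, u⟫ := fun u => (InnerProductSpace.toDual_symm_apply).symm
    have h0B : (0 : EuclideanSpace ℝ (Fin f)) ∈ B := by
      refine ⟨by simp, by simp, fun y hy => by simp⟩
    have h0T : (0 : EuclideanSpace ℝ (Fin n)) ∈ T := ⟨0, h0B, by simp⟩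
    have hc0 : 0 < c := by
      have := hTlt 0 h0T
      rwa [map_zero] at this
    set S : Set (EuclideanSpace ℝ (Fin f)) :=
      {v | ∃ z ∈ Oin f, ∃ y ∈ K, v = z + (ContinuousLinearMap.adjoint A) y} with hS
    set Scone : ConvexCone ℝ (EuclideanSpace ℝ (Fin f)) :=
      { carrier := S
        smul_mem' := by
          rintro cc hcc v ⟨z, hz, y, hy, rfl⟩
          exact ⟨cc • z, Oin_smul hcc.le hz, cc • y, hKcone cc hcc.le y hy,
            by rw [smul_add, map_smul]⟩
        add_mem' := by
          rintro v ⟨z₁, hz₁, y₁, hy₁, rfl⟩ v' ⟨z₂, hz₂, y₂, hy₂, rfl⟩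
          exact ⟨z₁ + z₂, Oin_add hz₁ hz₂, y₁ + y₂, hKadd _ hy₁ _ hy₂,
            by rw [map_add]; abel⟩ } with hScone
    have hS0 : (0 : EuclideanSpace ℝ (Fin f)) ∈ S :=
      ⟨0, zero_mem_Oin, 0, hK0, by simp⟩
    set b : EuclideanSpace ℝ (Fin f) := WithLp.toLp 2 (fun i => 1 - c⁻¹ * ⟪h i, x⟫) with hbdef
    have hbi : ∀ i, b i = 1 - c⁻¹ * ⟪h i, x⟫ := fun i => rfl
    have hbS : b ∈ closure S := by
      have hmem : ∀ p : EuclideanSpace ℝ (Fin f), (∀ v ∈ closure S, 0 ≤ ⟪v, p⟫) →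
          0 ≤ ⟪p, b⟫ := by
        intro p hp
        have hpS : ∀ v ∈ S, 0 ≤ ⟪v, p⟫ := by
          intro v hv
          refine hp v ?_
          exact subset_closure hv
        have hpOout : ‖p‖ ≤ ∑ i, p i := by
          refine mem_Oout_of_dual fun z hz => hpS z ⟨z, hz, 0, hK0, by simp⟩
        have hpK : ∀ y ∈ K, 0 ≤ ⟪A p, y⟫ := by
          intro y hy
          have := hpS ((ContinuousLinearMap.adjoint A) y) ⟨0, zero_mem_Oin, y, hy, by simp⟩
          rwa [ContinuousLinearMap.adjoint_inner_left, real_inner_comm] at this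
        have hpb : ⟪p, b⟫ = (∑ i, p i) - c⁻¹ * ∑ i, p i * ⟪h i, x⟫ := by
          rw [inner_eq_sum]
          calc ∑ i, p i * b i = ∑ i, (p i - c⁻¹ * (p i * ⟪h i, x⟫)) :=
                Finset.sum_congr rfl fun i _ => by rw [hbi i]; ring
            _ = (∑ i, p i) - c⁻¹ * ∑ i, p i * ⟪h i, x⟫ := by
                rw [Finset.sum_sub_distrib, ← Finset.mul_sum]
        rcases eq_or_lt_of_le ((norm_nonneg p).trans hpOout) with hs0 | hs0
        · have hp0 : p = 0 := by
            have hle : ‖p‖ ≤ 0 := hpOout.trans hs0.symm.le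
            exact norm_le_zero_iff.mp hle
          rw [hp0, inner_zero_left]
        · set s := ∑ i, p i with hsdef
          have hssum : ∑ i, (s⁻¹ • p) i = 1 := by
            have : ∑ i, (s⁻¹ • p) i = s⁻¹ * s := by
              simp [hsdef, Finset.mul_sum]
            rw [this, inv_mul_cancel₀ (ne_of_gt hs0)]
          have hqB : (s⁻¹ • p) ∈ B := by
            refine ⟨?_, ?_, ?_⟩
            · rw [hssum, norm_smul, Real.norm_eq_abs, abs_of_nonneg (inv_nonneg.mpr hs0.le)]
              calc s⁻¹ * ‖p‖ ≤ s⁻¹ * s := by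
                    exact mul_le_mul_of_nonneg_left hpOout (inv_nonneg.mpr hs0.le)
                _ = 1 := inv_mul_cancel₀ (ne_of_gt hs0)
            · rw [hssum]
            · intro y hy
              rw [map_smul, real_inner_smul_left]
              exact mul_nonneg (inv_nonneg.mpr hs0.le) (hpK y hy)
          have hqT := hTlt _ ⟨s⁻¹ • p, hqB, rfl⟩
          rw [hφ] at hqT
          have hsum2 : ⟪x, ∑ i, (s⁻¹ • p) i • h i⟫ = s⁻¹ * ∑ i, p i * ⟪h i, x⟫ := by
            rw [inner_sum]
            rw [Finset.mul_sum]
            refine Finset.sum_congr rfl fun i _ => ?_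
            rw [real_inner_smul_right, real_inner_comm]
            simp only [PiLp.smul_apply, smul_eq_mul]
            ring
          rw [hsum2] at hqT
          have hlt : ∑ i, p i * ⟪h i, x⟫ < c * s := by
            have := mul_lt_mul_of_pos_left hqT hs0
            rw [← mul_assoc, mul_inv_cancel₀ (ne_of_gt hs0), one_mul] at this
            linarith [this]
          rw [hpb]
          have hcinv : 0 < c⁻¹ := inv_pos.mpr hc0
          have : c⁻¹ * ∑ i, p i * ⟪h i, x⟫ < c⁻¹ * (c * s) :=
            mul_lt_mul_of_pos_left hlt hcinv
          rw [← mul_assoc, inv_mul_cancel₀ (ne_of_gt hc0), one_mul] at this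
          linarith
      by_contra hbn
      have hSconv : Convex ℝ (closure S) := Scone.convex.closure
      obtain ⟨φ', c', hlt', hcb'⟩ := geometric_hahn_banach_closed_point hSconv isClosed_closure hbn
      set q := (InnerProductSpace.toDual ℝ _).symm φ' with hqdef
      have hq : ∀ u, φ' u = ⟪q, u⟫ := fun u => (InnerProductSpace.toDual_symm_apply).symm
      have hc'0 : 0 < c' := by simpa using hlt' 0 (subset_closure hS0)
      have hle0 : ∀ v ∈ S, φ' v ≤ 0 := by
        intro v hv
        by_contra hpos
        push_neg at hpos
        have hsm : (c' / φ' v) • v ∈ S := Scone.smul_mem (div_pos hc'0 hpos) hv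
        have := hlt' _ (subset_closure hsm)
        rw [map_smul, smul_eq_mul, div_mul_cancel₀ _ hpos.ne'] at this
        exact lt_irrefl _ this
      have hle0' : ∀ v ∈ closure S, φ' v ≤ 0 := fun v hv =>
        closure_minimal hle0 (isClosed_le φ'.continuous continuous_const) hv
      have hfin := hmem (-q) (fun v hv => by
        rw [inner_neg_right, real_inner_comm, ← hq]
        linarith [hle0' v hv])
      rw [inner_neg_left, ← hq] at hfin
      linarith [hcb', hc'0]
    obtain ⟨ε, hε, hball⟩ := exists_ball_Oin f
    have hxInn : ∀ τ : ℝ, 0 < τ → τ < 1 → ∃ y' ∈ K,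
        (WithLp.toLp 2 (fun i => 1 - ⟪h i, ((1-τ) • (c⁻¹ • x))⟫ - (ContinuousLinearMap.adjoint A y') i) :
          EuclideanSpace ℝ (Fin f)) ∈ Oin f := by
      intro τ hτ0 hτ1
      have hτ' : (0:ℝ) < 1 - τ := by linarith
      have hδ : (0:ℝ) < τ * ε / (1 - τ) := by positivity
      obtain ⟨v, hvS, hvd⟩ := Metric.mem_closure_iff.mp hbS _ hδ
      obtain ⟨z, hzO, y, hyK, rfl⟩ := hvS
      refine ⟨(1-τ) • y, hKcone _ hτ'.le y hyK, ?_⟩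
      have hEq : (WithLp.toLp 2 (fun i => 1 - ⟪h i, ((1-τ) • (c⁻¹ • x))⟫ -
            (ContinuousLinearMap.adjoint A ((1-τ) • y)) i) : EuclideanSpace ℝ (Fin f))
          = (1-τ) • z + (τ • oneE f + (1-τ) • (b - (z + (ContinuousLinearMap.adjoint A) y))) := by
        ext i
        have hinner : ⟪h i, ((1-τ) • (c⁻¹ • x))⟫ = (1-τ) * (c⁻¹ * ⟪h i, x⟫) := by
          rw [real_inner_smul_right, real_inner_smul_right]
        simp only [PiLp.toLp_apply, PiLp.add_apply, PiLp.smul_apply, PiLp.sub_apply, smul_eq_mul, map_smul]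
        rw [hinner, hbi i]
        simp only [oneE, PiLp.toLp_apply]
        ring
      rw [hEq]
      refine Oin_add (Oin_smul hτ'.le hzO) ?_
      have h2 : τ • oneE f + (1-τ) • (b - (z + (ContinuousLinearMap.adjoint A) y)) =
          τ • (oneE f + τ⁻¹ • ((1-τ) • (b - (z + (ContinuousLinearMap.adjoint A) y)))) := by
        rw [smul_add, smul_smul, mul_inv_cancel₀ (ne_of_gt hτ0), one_smul]
      rw [h2]
      refine Oin_smul hτ0.le (hball _ ?_)
      rw [norm_smul, norm_smul, Real.norm_eq_abs, Real.norm_eq_abs,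
        abs_of_pos (inv_pos.mpr hτ0), abs_of_pos hτ']
      have hvd' : (1-τ) * ‖b - (z + (ContinuousLinearMap.adjoint A) y)‖ < τ * ε := by
        rw [dist_eq_norm] at hvd
        rw [lt_div_iff₀ hτ'] at hvd
        linarith [hvd]
      calc τ⁻¹ * ((1-τ) * ‖b - (z + (ContinuousLinearMap.adjoint A) y)‖) < τ⁻¹ * (τ * ε) :=
            mul_lt_mul_of_pos_left hvd' (inv_pos.mpr hτ0)
        _ = ε := by field_simp
    have hd : c < ⟪w, x⟫ := by
      have := hcw
      rw [hφ] at this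
      rwa [real_inner_comm] at this
    set r := c⁻¹ * ⟪w, x⟫ with hr
    have hle : ∀ τ : ℝ, 0 < τ → τ < 1 → (1-τ) * r ≤ 1 := by
      intro τ h1 h2
      have := hw _ (hxInn τ h1 h2)
      rwa [real_inner_smul_right, real_inner_smul_right, ← hr] at this
    have hr1 : 1 < r := by
      rw [hr, inv_mul_eq_div]
      exact (one_lt_div hc0).mpr hd
    have hτa : 0 < (r-1)/(2*r) := div_pos (by linarith) (by linarith)
    have hτb : (r-1)/(2*r) < 1 := (div_lt_one (by linarith)).mpr (by linarith)
    have hfin := hle _ hτa hτb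
    have heq2 : (1 - (r-1)/(2*r)) * r = (r+1)/2 := by
      field_simp
      ring
    rw [heq2] at hfin
    linarith
  · -- easy direction
    rintro ⟨p, hp1, hp2, hp3, rfl⟩ x ⟨y, hyK, hzO⟩
    set z : EuclideanSpace ℝ (Fin f) :=
      WithLp.toLp 2 (fun i => 1 - ⟪h i, x⟫ - (ContinuousLinearMap.adjoint A y) i) with hzdef
    have hz_i : ∀ i, z i = 1 - ⟪h i, x⟫ - (ContinuousLinearMap.adjoint A y) i := fun i => rfl
    have hzOin : z ∈ Oin f := hzO
    have hcalc : ⟪∑ i, p i • h i, x⟫ =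
        (∑ i, p i) - ⟪p, z⟫ - ⟪p, (ContinuousLinearMap.adjoint A) y⟫ := by
      rw [sum_inner, inner_eq_sum, inner_eq_sum]
      rw [← Finset.sum_sub_distrib, ← Finset.sum_sub_distrib]
      refine Finset.sum_congr rfl fun i _ => ?_
      rw [real_inner_smul_left, hz_i i]
      ring
    have ht1 : 0 ≤ ⟪p, z⟫ := inner_nonneg_pairing hp1 hzOin
    have ht2 : 0 ≤ ⟪p, (ContinuousLinearMap.adjoint A) y⟫ := by
      rw [real_inner_comm, ContinuousLinearMap.adjoint_inner_left]
      rw [real_inner_comm]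
      exact hp3 y hyK
    rw [hcalc]
    linarith [hp2]
end

section
/- Let P = {x : Hᵀx ≤ 𝟙} be a polytope with f facets such that the origin is its analytic center, so that ∑_i h_i = 0 and every column of the slack matrix S sums to f. Then P ⊆ (f−1)·Inn_P(0), where Inn_P(0) = {x : 𝟙 − Hᵀx ∈ O_in^f}. -/
open RealInnerProductSpace Pointwise

theorem analytic_center_outer_bound (n f v : ℕ) (hf : 2 ≤ f)
    (h : Fin f → EuclideanSpace ℝ (Fin n))
    (V : Fin v → EuclideanSpace ℝ (Fin n))
    (hPV : {x : EuclideanSpace ℝ (Fin n) | ∀ i, ⟪h i, x⟫ ≤ 1} =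
      convexHull ℝ (Set.range V))
    (hP0 : (0 : EuclideanSpace ℝ (Fin n)) ∈
      interior {x : EuclideanSpace ℝ (Fin n) | ∀ i, ⟪h i, x⟫ ≤ 1})
    (hsum : ∑ i, h i = 0) :
    {x : EuclideanSpace ℝ (Fin n) | ∀ i, ⟪h i, x⟫ ≤ 1} ⊆
      ((f : ℝ) - 1) •
        {x : EuclideanSpace ℝ (Fin n) |
          (WithLp.toLp 2 (fun i => 1 - ⟪h i, x⟫) : EuclideanSpace ℝ (Fin f)) ∈
          {z : EuclideanSpace ℝ (Fin f) | Real.sqrt ((f : ℝ) - 1) * ‖z‖ ≤ ∑ i, z i}} := by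
  intro x hx
  have hf2 : (2:ℝ) ≤ (f:ℝ) := by exact_mod_cast hf
  have hfpos : (0:ℝ) < (f:ℝ) - 1 := by linarith
  rw [Set.mem_smul_set_iff_inv_smul_mem₀ (ne_of_gt hfpos)]
  simp only [Set.mem_setOf_eq]
  set s : Fin f → ℝ := fun i => 1 - ⟪h i, x⟫ with hs
  have hs0 : ∀ i, 0 ≤ s i := fun i => by have := hx i; simp only [hs]; linarith
  have hinner0 : ∑ i, ⟪h i, x⟫ = 0 := by
    rw [← sum_inner, hsum, inner_zero_left]
  have hsums : ∑ i, s i = f := by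
    simp only [hs, Finset.sum_sub_distrib, hinner0, Finset.sum_const, Finset.card_univ,
      Fintype.card_fin, nsmul_eq_mul, mul_one, sub_zero]
  set z : EuclideanSpace ℝ (Fin f) := WithLp.toLp 2 (fun i => 1 - ⟪h i, ((f:ℝ)-1)⁻¹ • x⟫) with hz
  have hzi : ∀ i, z i = ((f:ℝ) - 2 + s i) / ((f:ℝ) - 1) := by
    intro i
    have : ⟪h i, ((f:ℝ)-1)⁻¹ • x⟫ = ((f:ℝ)-1)⁻¹ * ⟪h i, x⟫ :=
      real_inner_smul_right _ _ _
    rw [hz]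
    simp only [PiLp.toLp_apply, this, hs]
    field_simp
    ring
  have hsumz : ∑ i, z i = f := by
    simp only [hzi]
    rw [← Finset.sum_div, Finset.sum_add_distrib, Finset.sum_const, hsums,
      Finset.card_univ, Fintype.card_fin, nsmul_eq_mul]
    field_simp
    ring
  have hss : ∑ i, (s i)^2 ≤ (f:ℝ)^2 := by
    calc ∑ i, (s i)^2 ≤ (∑ i, s i)^2 :=
          Finset.sum_sq_le_sq_sum_of_nonneg (fun i _ => hs0 i)
      _ = (f:ℝ)^2 := by rw [hsums]
  have hN : ∑ i, ((f:ℝ) - 2 + s i)^2 ≤ (f:ℝ)^2 * ((f:ℝ) - 1) := by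
    have expand : ∑ i, ((f:ℝ) - 2 + s i)^2
        = (f:ℝ) * ((f:ℝ)-2)^2 + 2*((f:ℝ)-2)*(f:ℝ) + ∑ i, (s i)^2 := by
      have : ∀ i ∈ Finset.univ, ((f:ℝ) - 2 + s i)^2
          = ((f:ℝ)-2)^2 + 2*((f:ℝ)-2)*(s i) + (s i)^2 := by intros; ring
      rw [Finset.sum_congr rfl this, Finset.sum_add_distrib, Finset.sum_add_distrib,
        Finset.sum_const, ← Finset.mul_sum, hsums, Finset.card_univ, Fintype.card_fin,
        nsmul_eq_mul]
    rw [expand]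
    nlinarith
  have hsq : ((f:ℝ) - 1) * ∑ i, ‖z i‖^2 ≤ (f:ℝ)^2 := by
    have heq : ∑ i, ‖z i‖^2 = (∑ i, ((f:ℝ) - 2 + s i)^2) / ((f:ℝ)-1)^2 := by
      rw [Finset.sum_div]
      refine Finset.sum_congr rfl fun i _ => ?_
      rw [Real.norm_eq_abs, sq_abs, hzi, div_pow]
    rw [heq]
    have h1 : ((f:ℝ)-1) * ((∑ i, ((f:ℝ) - 2 + s i)^2) / ((f:ℝ)-1)^2)
        = (∑ i, ((f:ℝ) - 2 + s i)^2) / ((f:ℝ)-1) := by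
      field_simp
    rw [h1, div_le_iff₀ hfpos]
    nlinarith
  have hnorm : ‖z‖ = Real.sqrt (∑ i, ‖z i‖^2) := EuclideanSpace.norm_eq z
  show Real.sqrt ((f:ℝ)-1) * ‖z‖ ≤ ∑ i, z i
  rw [hsumz, hnorm, ← Real.sqrt_mul (le_of_lt hfpos)]
  calc Real.sqrt (((f:ℝ)-1) * ∑ i, ‖z i‖^2) ≤ Real.sqrt ((f:ℝ)^2) :=
        Real.sqrt_le_sqrt hsq
    _ = (f:ℝ) := Real.sqrt_sq (by linarith)
end

section
/- Let P ⊆ Q ⊆ ℝ^n where P = conv{p₁,…,p_v} is a polytope with 0 in its interior and Q = {x : ⟨h_j,x⟩ ≤ 1, j=1,…,f} a polyhedron, with generalized slack matrix S_{P,Q} = 𝟙 − H_QᵀV_P. If A, B are nonnegative K*- and K-maps with S_{P,Q} = AᵀB, then C_B ⊆ C_A, where C_B = {V_P z : 𝟙ᵀz = 1, Bz ∈ K} and C_A = {x : ∃ y ∈ K, 𝟙 − H_Qᵀx − Aᵀy = 0}. Consequently P ⊆ C_B ⊆ C_A ⊆ Q. -/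
open RealInnerProductSpace

lemma euclid_decomp {v : ℕ} (z : EuclideanSpace ℝ (Fin v)) :
    z = ∑ j, z j • EuclideanSpace.single j (1:ℝ) := by
  ext i
  rw [show ((∑ j, z j • EuclideanSpace.single j (1:ℝ)) i)
    = ∑ j, (z j • EuclideanSpace.single j (1:ℝ)) i from by rw [WithLp.ofLp_sum, Finset.sum_apply]]
  simp [EuclideanSpace.single_apply]

theorem nested_polyhedra_containments (n f v m : ℕ)
    (h : Fin f → EuclideanSpace ℝ (Fin n))
    (V : Fin v → EuclideanSpace ℝ (Fin n))
    (hP0 : (0 : EuclideanSpace ℝ (Fin n)) ∈ interior (convexHull ℝ (Set.range V)))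
    (K : Set (EuclideanSpace ℝ (Fin m)))
    (hKclosed : IsClosed K) (hKconv : Convex ℝ K)
    (hKcone : ∀ c : ℝ, 0 ≤ c → ∀ y ∈ K, c • y ∈ K)
    (A : EuclideanSpace ℝ (Fin f) →L[ℝ] EuclideanSpace ℝ (Fin m))
    (B : EuclideanSpace ℝ (Fin v) →L[ℝ] EuclideanSpace ℝ (Fin m))
    (hA : ∀ i : Fin f, A (EuclideanSpace.single i 1) ∈
      {w : EuclideanSpace ℝ (Fin m) | ∀ y ∈ K, 0 ≤ ⟪w, y⟫})
    (hB : ∀ j : Fin v, B (EuclideanSpace.single j 1) ∈ K)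
    (hfact : ∀ (i : Fin f) (j : Fin v),
      1 - ⟪h i, V j⟫ = ⟪A (EuclideanSpace.single i 1), B (EuclideanSpace.single j 1)⟫) :
    (convexHull ℝ (Set.range V) ⊆
      {x : EuclideanSpace ℝ (Fin n) | ∃ z : EuclideanSpace ℝ (Fin v),
        (∑ j, z j) = 1 ∧ B z ∈ K ∧ x = ∑ j, z j • V j}) ∧
    ({x : EuclideanSpace ℝ (Fin n) | ∃ z : EuclideanSpace ℝ (Fin v),
        (∑ j, z j) = 1 ∧ B z ∈ K ∧ x = ∑ j, z j • V j} ⊆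
      {x : EuclideanSpace ℝ (Fin n) | ∃ y ∈ K, ∀ i : Fin f,
        1 - ⟪h i, x⟫ - ⟪A (EuclideanSpace.single i 1), y⟫ = 0}) ∧
    ({x : EuclideanSpace ℝ (Fin n) | ∃ y ∈ K, ∀ i : Fin f,
        1 - ⟪h i, x⟫ - ⟪A (EuclideanSpace.single i 1), y⟫ = 0} ⊆
      {x : EuclideanSpace ℝ (Fin n) | ∀ i, ⟪h i, x⟫ ≤ 1}) := by
  refine ⟨?_, ?_, ?_⟩
  · -- P ⊆ C_B
    intro x hx
    rw [convexHull_range_eq_exists_affineCombination] at hx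
    obtain ⟨s, w, hw0, hw1, hwx⟩ := hx
    refine ⟨WithLp.toLp 2 (fun j => if j ∈ s then w j else 0 : Fin v → ℝ), ?_, ?_, ?_⟩
    · simp only [PiLp.toLp_apply]
      rw [Finset.sum_ite_mem, Finset.univ_inter, hw1]
    · have hz : B (WithLp.toLp 2 (fun j => if j ∈ s then w j else 0 : Fin v → ℝ))
          = ∑ j, (if j ∈ s then w j else 0) • B (EuclideanSpace.single j 1) := by
        conv_lhs => rw [euclid_decomp (WithLp.toLp 2 (fun j => if j ∈ s then w j else 0 : Fin v → ℝ) :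
          EuclideanSpace ℝ (Fin v))]
        rw [map_sum]
        simp only [PiLp.toLp_apply, ite_smul, zero_smul, map_smul, apply_ite B, map_zero]
      rw [hz]
      simp only [ite_smul, zero_smul]
      rw [Finset.sum_ite_mem, Finset.univ_inter]
      exact hKconv.sum_mem hw0 hw1 (fun j _ => hB j)
    · rw [← hwx, s.affineCombination_eq_linear_combination V w hw1]
      rw [← Finset.sum_subset (Finset.subset_univ s)]
      · exact Finset.sum_congr rfl (fun j hj => by simp [hj])
      · intro j _ hj; simp [hj]
  · -- C_B ⊆ C_A
    rintro x ⟨z, hz1, hzK, rfl⟩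
    refine ⟨B z, hzK, fun i => ?_⟩
    have hBz : B z = ∑ j, z j • B (EuclideanSpace.single j 1) := by
      conv_lhs => rw [euclid_decomp z]
      rw [map_sum]; simp [map_smul]
    rw [hBz]
    have hx : ⟪h i, ∑ j, z j • V j⟫ = ∑ j, z j * ⟪h i, V j⟫ := by
      rw [inner_sum]; exact Finset.sum_congr rfl fun j _ => real_inner_smul_right _ _ _
    have hAy : ⟪A (EuclideanSpace.single i 1), ∑ j, z j • B (EuclideanSpace.single j 1)⟫
        = ∑ j, (z j - z j * ⟪h i, V j⟫) := by
      rw [inner_sum]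
      refine Finset.sum_congr rfl fun j _ => ?_
      rw [real_inner_smul_right, ← hfact i j]; ring
    rw [hx, hAy, Finset.sum_sub_distrib, hz1]
    ring
  · -- C_A ⊆ Q
    rintro x ⟨y, hyK, hy⟩ i
    have := hA i y hyK
    have h0 := hy i
    linarith
end
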